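/- Under linear driving δ(t) = δ_max − (ε/τ)t with ε = δ_max − δ_min, one has exp(−κ ∫₀^τ (1 − γ_T(δ(t))) dt) = e^{−κτ} (Z_T(δ_min)/Z_T(δ_max))^{κτT/ε}, where the right-hand side uses the real power function. Consequently the continuous-time probability of maximal work is Pr[W = ε] = p₀ e^{−κτ} (Z_T(δ_min)/Z_T(δ_max))^{κτT/ε}. -/

import Mathlib

open Set

/-- under linear driving `δ(t) = δmax − (ε/τ) t` with `ε = δmax − δmin`,
`exp(−κ ∫₀^τ (1 − γ_T(δ(t))) dt) = e^{−κτ} (Z(δmin)/Z(δmax))^{κτT/ε}` (real power),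
where `γ_T(δ) = 1/(1 + exp(δ/T))` and `Z(δ) = 1 + exp(−δ/T)`; consequently the
continuous-time probability of maximal work `W = ε` is
`p₀ e^{−κτ} (Z(δmin)/Z(δmax))^{κτT/ε}`. -/
theorem stmt9 (T δmin δmax τ κ p₀ : ℝ)
    (hT : 0 < T) (hmin : 0 < δmin) (hlt : δmin < δmax) (hτ : 0 < τ) (hκ : 0 < κ)
    (hp₀ : p₀ ∈ Icc (0 : ℝ) 1) :
    Real.exp (-(κ * ∫ t in (0 : ℝ)..τ,
        (1 - 1 / (1 + Real.exp ((δmax - (δmax - δmin) / τ * t) / T))))) =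
      Real.exp (-κ * τ) *
        ((1 + Real.exp (-δmin / T)) / (1 + Real.exp (-δmax / T))) ^
          (κ * τ * T / (δmax - δmin)) ∧
    p₀ * Real.exp (-(κ * ∫ t in (0 : ℝ)..τ,
        (1 - 1 / (1 + Real.exp ((δmax - (δmax - δmin) / τ * t) / T))))) =
      p₀ * Real.exp (-κ * τ) *
        ((1 + Real.exp (-δmin / T)) / (1 + Real.exp (-δmax / T))) ^
          (κ * τ * T / (δmax - δmin)) := by
  set ε := δmax - δmin with hε
  have hε0 : 0 < ε := sub_pos.mpr hlt
  set F : ℝ → ℝ := fun t =>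
    t - (τ * T / ε) * Real.log (1 + Real.exp (-(δmax - ε / τ * t) / T)) with hF
  have hderiv : ∀ t ∈ Set.uIcc (0 : ℝ) τ,
      HasDerivAt F (1 - 1 / (1 + Real.exp ((δmax - ε / τ * t) / T))) t := by
    intro t _
    have hg : HasDerivAt (fun t : ℝ => -(δmax - ε / τ * t) / T) (ε / τ / T) t := by
      have : HasDerivAt (fun t : ℝ => -(δmax - ε / τ * t)) (ε / τ) t := by
        have := ((hasDerivAt_id t).const_mul (ε / τ)).const_sub δmax
        exact HasDerivAt.congr_deriv this.neg (by ring)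
      simpa [mul_comm] using this.div_const T
    have hexp : HasDerivAt (fun t : ℝ => 1 + Real.exp (-(δmax - ε / τ * t) / T))
        (Real.exp (-(δmax - ε / τ * t) / T) * (ε / τ / T)) t :=
      (hg.exp).const_add 1
    have hpos : 0 < 1 + Real.exp (-(δmax - ε / τ * t) / T) := by positivity
    have hlog := (hexp.log (ne_of_gt hpos))
    have h := ((hasDerivAt_id t).sub (hlog.const_mul (τ * T / ε)))
    refine h.congr_deriv ?_
    have hx : Real.exp ((δmax - ε / τ * t) / T) * Real.exp (-(δmax - ε / τ * t) / T) = 1 := by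
      rw [← Real.exp_add, neg_div, add_neg_cancel, Real.exp_zero]
    have hpos2 : 0 < 1 + Real.exp ((δmax - ε / τ * t) / T) := by positivity
    have h1 : 1 / (1 + Real.exp ((δmax - ε / τ * t) / T)) =
        Real.exp (-(δmax - ε / τ * t) / T) / (1 + Real.exp (-(δmax - ε / τ * t) / T)) := by
      rw [div_eq_div_iff hpos2.ne' hpos.ne']; nlinarith [hx]
    rw [h1]
    field_simp
  have hcont : IntervalIntegrable
      (fun t => 1 - 1 / (1 + Real.exp ((δmax - ε / τ * t) / T))) MeasureTheory.volume 0 τ := by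
    apply Continuous.intervalIntegrable
    have : Continuous fun t : ℝ => (1 + Real.exp ((δmax - ε / τ * t) / T)) := by
      continuity
    exact continuous_const.sub (continuous_const.div this (fun t => by positivity))
  have hint : (∫ t in (0 : ℝ)..τ, (1 - 1 / (1 + Real.exp ((δmax - ε / τ * t) / T))))
      = F τ - F 0 :=
    intervalIntegral.integral_eq_sub_of_hasDerivAt hderiv hcont
  have hFτ : F τ = τ - (τ * T / ε) * Real.log (1 + Real.exp (-δmin / T)) := by
    have h2 : δmax - ε / τ * τ = δmin := by field_simp; ring
    simp only [hF, h2]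
  have hF0 : F 0 = - (τ * T / ε) * Real.log (1 + Real.exp (-δmax / T)) := by
    simp [hF]
  have hZmin : 0 < 1 + Real.exp (-δmin / T) := by positivity
  have hZmax : 0 < 1 + Real.exp (-δmax / T) := by positivity
  have hratio : 0 < (1 + Real.exp (-δmin / T)) / (1 + Real.exp (-δmax / T)) :=
    div_pos hZmin hZmax
  have key : Real.exp (-(κ * ∫ t in (0 : ℝ)..τ,
        (1 - 1 / (1 + Real.exp ((δmax - ε / τ * t) / T))))) =
      Real.exp (-κ * τ) *
        ((1 + Real.exp (-δmin / T)) / (1 + Real.exp (-δmax / T))) ^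
          (κ * τ * T / ε) := by
    rw [hint, hFτ, hF0, Real.rpow_def_of_pos hratio, ← Real.exp_add,
      Real.log_div hZmin.ne' hZmax.ne']
    ring_nf
  exact ⟨key, by rw [key]; ring⟩
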